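/- arXiv:1909.11312 — 2 statements merged into one kernel-verified Lean document; each statement's English description precedes it below -/
import Mathlib

section
/- Suppose r is a solution of the classical Yang–Baxter equation on L, r + τ(r) is L-invariant, and R is a Rota–Baxter operator of weight λ. Then there is a Lie ideal I of L with I ⊆ [L, L] and R(I) = 0, such that R*(I) ⊆ I, the induced maps R̄ and R̄* on the quotient L/I are Rota–Baxter operators of weight λ, and R̄(z) + R̄*(z) + λz = 0 for every z in the commutator ideal [L/I, L/I]. -/
open TensorProduct

section AuxCYBE

variable {F : Type*} [Field F] {L : Type*} [LieRing L] [LieAlgebra F L]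

/-- Contraction `u ⊗ v ↦ ω v x • u`. -/
noncomputable def ctrAux (ω : LinearMap.BilinForm F L) (x : L) : L ⊗[F] L →ₗ[F] L :=
  TensorProduct.lift (LinearMap.mk₂ F (fun u v => ω v x • u)
    (fun u u' v => smul_add _ u u')
    (fun c u v => smul_comm _ c u)
    (fun u v v' => by rw [map_add, LinearMap.add_apply, add_smul])
    (fun c u v => by rw [map_smul, LinearMap.smul_apply, smul_eq_mul, mul_smul]))

@[simp] lemma ctrAux_tmul (ω : LinearMap.BilinForm F L) (x u v : L) :
    ctrAux ω x (u ⊗ₜ[F] v) = ω v x • u := by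
  simp [ctrAux]

/-- The scalar map `v ⊗ w ↦ ω v x * ω w y`. -/
noncomputable def sc2Aux (ω : LinearMap.BilinForm F L) (x y : L) : L ⊗[F] L →ₗ[F] F :=
  TensorProduct.lift (LinearMap.mk₂ F (fun v w => ω v x * ω w y)
    (fun v v' w => by rw [map_add, LinearMap.add_apply, add_mul])
    (fun c v w => by
      rw [map_smul, LinearMap.smul_apply, smul_eq_mul, smul_eq_mul, mul_assoc])
    (fun v w w' => by rw [map_add, LinearMap.add_apply, mul_add])
    (fun c v w => by
      rw [map_smul, LinearMap.smul_apply, smul_eq_mul, smul_eq_mul]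
      ring))

@[simp] lemma sc2Aux_tmul (ω : LinearMap.BilinForm F L) (x y v w : L) :
    sc2Aux ω x y (v ⊗ₜ[F] w) = ω v x * ω w y := by
  simp [sc2Aux]

/-- Contraction `u ⊗ (v ⊗ w) ↦ (ω v x * ω w y) • u`. -/
noncomputable def ctr3Aux (ω : LinearMap.BilinForm F L) (x y : L) : L ⊗[F] (L ⊗[F] L) →ₗ[F] L :=
  TensorProduct.lift (LinearMap.mk₂ F (fun u t => sc2Aux ω x y t • u)
    (fun u u' t => smul_add _ u u')
    (fun c u t => smul_comm _ c u)
    (fun u t t' => by rw [map_add, add_smul])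
    (fun c u t => by rw [map_smul, smul_eq_mul, mul_smul]))

@[simp] lemma ctr3Aux_tmul (ω : LinearMap.BilinForm F L) (x y u v w : L) :
    ctr3Aux ω x y (u ⊗ₜ[F] (v ⊗ₜ[F] w)) = (ω v x * ω w y) • u := by
  simp [ctr3Aux]

lemma sumLieAux {ι : Type*} (s : Finset ι) (f : ι → L) (y : L) :
    ⁅∑ i ∈ s, f i, y⁆ = ∑ i ∈ s, ⁅f i, y⁆ := by
  let φ : L →+ L := ⟨⟨fun z : L => ⁅z, y⁆, zero_lie y⟩, fun u v => add_lie u v y⟩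
  exact map_sum φ f s

lemma lieSumAux {ι : Type*} (s : Finset ι) (f : ι → L) (y : L) :
    ⁅y, ∑ i ∈ s, f i⁆ = ∑ i ∈ s, ⁅y, f i⁆ := by
  let φ : L →+ L := ⟨⟨fun z : L => ⁅y, z⁆, lie_zero y⟩, fun u v => lie_add y u v⟩
  exact map_sum φ f s

lemma rstarFormAux (ω : LinearMap.BilinForm F L) (hnd : ω.Nondegenerate)
    (hsymm : ∀ x y : L, ω x y = ω y x)
    {ι : Type*} [Fintype ι] (a b : ι → L) (R Rstar : L →ₗ[F] L)
    (hR : ∀ x : L, R x = ∑ i, ω (b i) x • a i)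
    (hadj : ∀ x y : L, ω (R x) y = ω x (Rstar y)) :
    ∀ x : L, Rstar x = ∑ i, ω (a i) x • b i := by
  intro x
  have key : ∀ z : L, ω z (Rstar x - ∑ i, ω (a i) x • b i) = 0 := by
    intro z
    rw [map_sub, ← hadj, hR z, map_sum, LinearMap.sum_apply]
    simp only [map_smul, LinearMap.smul_apply, smul_eq_mul, LinearMap.coe_sum,
      Finset.sum_apply, map_sum]
    rw [sub_eq_zero]
    exact Finset.sum_congr rfl fun i _ => by rw [hsymm z (b i)]; ring
  have h0 : Rstar x - ∑ i, ω (a i) x • b i = 0 := by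
    apply hnd.1
    intro n
    rw [hsymm]; exact key n
  rw [sub_eq_zero] at h0; exact h0

lemma invFormAux (ω : LinearMap.BilinForm F L)
    (hinv : ∀ x y z : L, ω ⁅x, y⁆ z = ω x ⁅y, z⁆)
    {ι : Type*} [Fintype ι] (a b : ι → L) (R Rstar : L →ₗ[F] L)
    (hR : ∀ x : L, R x = ∑ i, ω (b i) x • a i)
    (hRs : ∀ x : L, Rstar x = ∑ i, ω (a i) x • b i)
    (hinvr : ∀ y : L, ∑ i, (⁅a i, y⁆ ⊗ₜ[F] b i + a i ⊗ₜ[F] ⁅b i, y⁆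
        + ⁅b i, y⁆ ⊗ₜ[F] a i + b i ⊗ₜ[F] ⁅a i, y⁆) = (0 : L ⊗[F] L)) :
    ∀ x y : L, ⁅R x, y⁆ + R ⁅y, x⁆ + ⁅Rstar x, y⁆ + Rstar ⁅y, x⁆ = 0 := by
  intro x y
  have h := congrArg (ctrAux ω x) (hinvr y)
  rw [map_sum, map_zero] at h
  simp only [map_add, ctrAux_tmul] at h
  calc ⁅R x, y⁆ + R ⁅y, x⁆ + ⁅Rstar x, y⁆ + Rstar ⁅y, x⁆
      = ∑ i, (ω (b i) x • ⁅a i, y⁆ + ω (b i) ⁅y, x⁆ • a i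
          + ω (a i) x • ⁅b i, y⁆ + ω (a i) ⁅y, x⁆ • b i) := by
        rw [hR x, hRs x, hR ⁅y, x⁆, hRs ⁅y, x⁆, sumLieAux Finset.univ, sumLieAux Finset.univ,
          ← Finset.sum_add_distrib, ← Finset.sum_add_distrib, ← Finset.sum_add_distrib]
        exact Finset.sum_congr rfl fun i _ => by rw [smul_lie, smul_lie]
    _ = 0 := by
        rw [← h]
        exact Finset.sum_congr rfl fun i _ => by rw [hinv (b i) y x, hinv (a i) y x]

lemma cybeContrAux (ω : LinearMap.BilinForm F L)
    (hsymm : ∀ x y : L, ω x y = ω y x)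
    (hinv : ∀ x y z : L, ω ⁅x, y⁆ z = ω x ⁅y, z⁆)
    {ι : Type*} [Fintype ι] (a b : ι → L) (R Rstar : L →ₗ[F] L)
    (hR : ∀ x : L, R x = ∑ i, ω (b i) x • a i)
    (hRs : ∀ x : L, Rstar x = ∑ i, ω (a i) x • b i)
    (hCYBE : ∑ i, ∑ j, (⁅a i, a j⁆ ⊗ₜ[F] (b i ⊗ₜ[F] b j)
        - a i ⊗ₜ[F] (⁅a j, b i⁆ ⊗ₜ[F] b j)
        + a i ⊗ₜ[F] (a j ⊗ₜ[F] ⁅b i, b j⁆)) = (0 : L ⊗[F] (L ⊗[F] L))) :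
    ∀ x y : L, ⁅R x, R y⁆ - R ⁅x, R y⁆ + R ⁅Rstar x, y⁆ = 0 := by
  have hws : ∀ u v w : L, ω u ⁅v, w⁆ = ω v ⁅w, u⁆ := by
    intro u v w
    rw [hsymm u ⁅v, w⁆, hinv v w u]
  intro x y
  have h := congrArg (ctr3Aux ω x y) hCYBE
  rw [map_sum, map_zero] at h
  simp only [map_sum, map_add, map_sub, ctr3Aux_tmul] at h
  have T1 : ⁅R x, R y⁆ = ∑ i, ∑ j, (ω (b i) x * ω (b j) y) • ⁅a i, a j⁆ := by
    rw [hR x, hR y, sumLieAux Finset.univ]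
    refine Finset.sum_congr rfl fun i _ => ?_
    rw [smul_lie, lieSumAux Finset.univ, Finset.smul_sum]
    exact Finset.sum_congr rfl fun j _ => by rw [lie_smul, smul_smul]
  have T2 : R ⁅x, R y⁆ = ∑ i, ∑ j, (ω ⁅a j, b i⁆ x * ω (b j) y) • a i := by
    rw [hR ⁅x, R y⁆]
    refine Finset.sum_congr rfl fun i _ => ?_
    rw [hR y, lieSumAux Finset.univ, map_sum, Finset.sum_smul]
    refine Finset.sum_congr rfl fun j _ => ?_
    rw [lie_smul, map_smul, smul_eq_mul]
    have : ω (b i) ⁅x, a j⁆ = ω ⁅a j, b i⁆ x := by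
      rw [hws (b i) x (a j), hws x (a j) (b i), hinv]
    rw [this, mul_comm]
  have T3 : R ⁅Rstar x, y⁆ = ∑ i, ∑ j, (ω (a j) x * ω ⁅b i, b j⁆ y) • a i := by
    rw [hR ⁅Rstar x, y⁆]
    refine Finset.sum_congr rfl fun i _ => ?_
    rw [hRs x, sumLieAux Finset.univ, map_sum, Finset.sum_smul]
    refine Finset.sum_congr rfl fun j _ => ?_
    rw [smul_lie, map_smul, smul_eq_mul, hinv]
  rw [T1, T2, T3]
  simpa [Finset.sum_sub_distrib, Finset.sum_add_distrib] using h

end AuxCYBE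

/-- The linear map induced on the quotient `L ⧸ I` by a linear map `T : L → L`
preserving the Lie ideal `I`. -/
def inducedQuotMap (F : Type*) [Field F] (L : Type*) [LieRing L] [LieAlgebra F L]
    (I : LieIdeal F L) (T : L →ₗ[F] L) (h : ∀ x ∈ I, T x ∈ I) :
    (L ⧸ I) →ₗ[F] (L ⧸ I) :=
  Submodule.mapQ I.toSubmodule I.toSubmodule T h

theorem stmt_10
    (F : Type*) [Field F] [CharZero F]
    (L : Type*) [LieRing L] [LieAlgebra F L] [FiniteDimensional F L]
    (ω : LinearMap.BilinForm F L)
    (hnd : ω.Nondegenerate)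
    (hsymm : ∀ x y : L, ω x y = ω y x)
    (hinv : ∀ x y z : L, ω ⁅x, y⁆ z = ω x ⁅y, z⁆)
    (ι : Type*) [Fintype ι] (a b : ι → L)
    (R Rstar : L →ₗ[F] L)
    (hR : ∀ x : L, R x = ∑ i, ω (b i) x • a i)
    (hadj : ∀ x y : L, ω (R x) y = ω x (Rstar y))
    (hCYBE : ∑ i, ∑ j, (⁅a i, a j⁆ ⊗ₜ[F] (b i ⊗ₜ[F] b j)
        - a i ⊗ₜ[F] (⁅a j, b i⁆ ⊗ₜ[F] b j)
        + a i ⊗ₜ[F] (a j ⊗ₜ[F] ⁅b i, b j⁆)) = (0 : L ⊗[F] (L ⊗[F] L)))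
    (hinvr : ∀ y : L, ∑ i, (⁅a i, y⁆ ⊗ₜ[F] b i + a i ⊗ₜ[F] ⁅b i, y⁆
        + ⁅b i, y⁆ ⊗ₜ[F] a i + b i ⊗ₜ[F] ⁅a i, y⁆) = (0 : L ⊗[F] L))
    (lam : F)
    (hRB : ∀ x y : L, ⁅R x, R y⁆ = R (⁅R x, y⁆ + ⁅x, R y⁆ + lam • ⁅x, y⁆)) :
    ∃ I : LieIdeal F L,
      I ≤ ⁅(⊤ : LieIdeal F L), (⊤ : LieIdeal F L)⁆ ∧
      (∀ x ∈ I, R x = 0) ∧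
      ∃ (hRI : ∀ x ∈ I, R x ∈ I) (hRsI : ∀ x ∈ I, Rstar x ∈ I),
        (∀ x y : L ⧸ I,
          ⁅inducedQuotMap F L I R hRI x, inducedQuotMap F L I R hRI y⁆ =
          inducedQuotMap F L I R hRI
            (⁅inducedQuotMap F L I R hRI x, y⁆ + ⁅x, inducedQuotMap F L I R hRI y⁆
              + lam • ⁅x, y⁆)) ∧
        (∀ x y : L ⧸ I,
          ⁅inducedQuotMap F L I Rstar hRsI x, inducedQuotMap F L I Rstar hRsI y⁆ =
          inducedQuotMap F L I Rstar hRsI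
            (⁅inducedQuotMap F L I Rstar hRsI x, y⁆ + ⁅x, inducedQuotMap F L I Rstar hRsI y⁆
              + lam • ⁅x, y⁆)) ∧
        (∀ z ∈ (⁅(⊤ : LieIdeal F (L ⧸ I)), (⊤ : LieIdeal F (L ⧸ I))⁆ : LieIdeal F (L ⧸ I)),
          inducedQuotMap F L I R hRI z + inducedQuotMap F L I Rstar hRsI z + lam • z = 0) := by
  classical
  have hRs : ∀ x : L, Rstar x = ∑ i, ω (a i) x • b i :=
    rstarFormAux ω hnd hsymm a b R Rstar hR hadj
  have e1 := invFormAux ω hinv a b R Rstar hR hRs hinvr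
  have e2 := cybeContrAux ω hsymm hinv a b R Rstar hR hRs hCYBE
  -- the map S = R + R* + lam • id
  set S : L →ₗ[F] L := R + Rstar + lam • LinearMap.id with hSdef
  have hSapp : ∀ x : L, S x = R x + Rstar x + lam • x := by
    intro x
    simp [hSdef]
  have Sbr : ∀ x y : L, S ⁅x, y⁆ = ⁅S x, y⁆ := by
    intro x y
    have h := e1 x y
    have h1 : R ⁅y, x⁆ = -R ⁅x, y⁆ := by rw [← lie_skew x y, map_neg, neg_neg]
    have h2 : Rstar ⁅y, x⁆ = -Rstar ⁅x, y⁆ := by rw [← lie_skew x y, map_neg, neg_neg]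
    rw [h1, h2] at h
    rw [hSapp ⁅x, y⁆, hSapp x, add_lie, add_lie, smul_lie]
    linear_combination (norm := module) -h
  have key3 : ∀ x y : L, R ⁅S x, y⁆ = 0 := by
    intro x y
    have h1 := hRB x y
    have h2 := e2 x y
    rw [map_add, map_add, map_smul] at h1
    rw [hSapp, add_lie, add_lie, smul_lie, map_add, map_add, map_smul]
    linear_combination (norm := module) h2 - h1
  -- the ideal
  set K : Submodule F L := Submodule.span F {z : L | ∃ x y : L, ⁅S x, y⁆ = z} with hKdef
  have hgen : ∀ x y : L, ⁅S x, y⁆ ∈ K := fun x y => Submodule.subset_span ⟨x, y, rfl⟩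
  have hKlie : ∀ (u m : L), m ∈ K → ⁅u, m⁆ ∈ K := by
    intro u m hm
    refine Submodule.span_induction ?_ ?_ ?_ ?_ hm
    · rintro z ⟨x, y, rfl⟩
      rw [← lie_skew]
      refine K.neg_mem ?_
      rw [← Sbr x y]
      exact hgen ⁅x, y⁆ u
    · rw [lie_zero]; exact K.zero_mem
    · intro p q _ _ hp hq; rw [lie_add]; exact K.add_mem hp hq
    · intro c p _ hp; rw [lie_smul]; exact K.smul_mem c hp
  set Idl : LieIdeal F L := { K with lie_mem := fun {x m} hm => hKlie x m hm } with hIdef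
  have hmemIK : ∀ z : L, z ∈ Idl ↔ z ∈ K := fun z => Iff.rfl
  have hIK : Idl.toSubmodule = K := rfl
  -- R vanishes on the ideal
  have hR0 : ∀ z ∈ Idl, R z = 0 := by
    intro z hz
    refine Submodule.span_induction ?_ ?_ ?_ ?_ ((hmemIK z).mp hz)
    · rintro w ⟨x, y, rfl⟩
      exact key3 x y
    · exact map_zero R
    · intro p q _ _ hp hq
      rw [map_add, hp, hq, add_zero]
    · intro c p _ hp
      rw [map_smul, hp, smul_zero]
  have hRI : ∀ z ∈ Idl, R z ∈ Idl := by
    intro z hz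
    rw [hR0 z hz]
    exact Idl.zero_mem
  have hSK : ∀ z ∈ K, S z ∈ K := by
    intro z hz
    refine Submodule.span_induction ?_ ?_ ?_ ?_ hz
    · rintro w ⟨x, y, rfl⟩
      rw [Sbr (S x) y]
      exact hgen (S x) y
    · rw [map_zero]; exact K.zero_mem
    · intro p q _ _ hp hq; rw [map_add]; exact K.add_mem hp hq
    · intro c p _ hp; rw [map_smul]; exact K.smul_mem c hp
  have hRsE : ∀ z : L, Rstar z = S z - R z - lam • z := by
    intro z
    rw [hSapp]
    abel
  have hRsK : ∀ z ∈ K, Rstar z ∈ K := by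
    intro z hz
    rw [hRsE z, hR0 z ((hmemIK z).mpr hz), sub_zero]
    exact K.sub_mem (hSK z hz) (K.smul_mem lam hz)
  have hRsI : ∀ z ∈ Idl, Rstar z ∈ Idl := fun z hz => (hmemIK _).mpr (hRsK z ((hmemIK z).mp hz))
  -- quotient machinery
  have hsur : ∀ zq : L ⧸ Idl, ∃ w : L, LieSubmodule.Quotient.mk (N := Idl) w = zq := fun zq =>
    Quotient.inductionOn' zq fun w => ⟨w, rfl⟩
  have hπbr : ∀ u v : L, LieSubmodule.Quotient.mk (N := Idl) ⁅u, v⁆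
      = ⁅LieSubmodule.Quotient.mk (N := Idl) u, LieSubmodule.Quotient.mk (N := Idl) v⁆ :=
    fun u v => LieSubmodule.Quotient.mk_bracket Idl u v
  have hπ0 : ∀ z ∈ K, LieSubmodule.Quotient.mk (N := Idl) z = 0 := fun z hz =>
    LieSubmodule.Quotient.mk_eq_zero'.mpr ((hmemIK z).mpr hz)
  have hπeq : ∀ p q : L, p - q ∈ K →
      LieSubmodule.Quotient.mk (N := Idl) p = LieSubmodule.Quotient.mk (N := Idl) q :=
    fun p q hpq => (Submodule.Quotient.eq Idl.toSubmodule).mpr hpq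
  have hQ : ∀ (T : L →ₗ[F] L) (hT : ∀ x ∈ Idl, T x ∈ Idl) (w : L),
      inducedQuotMap F L Idl T hT (LieSubmodule.Quotient.mk (N := Idl) w)
        = LieSubmodule.Quotient.mk (N := Idl) (T w) := fun T hT w =>
    Submodule.mapQ_apply Idl.toSubmodule _ _ w
  have hπadd : ∀ u v : L, LieSubmodule.Quotient.mk (N := Idl) (u + v)
      = LieSubmodule.Quotient.mk (N := Idl) u + LieSubmodule.Quotient.mk (N := Idl) v :=
    fun u v => rfl
  have hπsmul : ∀ (c : F) (u : L), LieSubmodule.Quotient.mk (N := Idl) (c • u)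
      = c • LieSubmodule.Quotient.mk (N := Idl) u := fun c u => rfl
  refine ⟨Idl, ?_, hR0, hRI, hRsI, ?_, ?_, ?_⟩
  -- (1) contained in the commutator ideal
  · intro z hz
    have hle : K ≤ (⁅(⊤ : LieIdeal F L), ⊤⁆ : LieIdeal F L).toSubmodule := by
      apply Submodule.span_le.mpr
      rintro w ⟨x, y, rfl⟩
      exact LieSubmodule.lie_mem_lie (LieSubmodule.mem_top _) (LieSubmodule.mem_top _)
    exact hle ((hmemIK z).mp hz)
  -- (2) induced R is Rota-Baxter of weight lam
  · intro xq yq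
    obtain ⟨u, rfl⟩ := hsur xq
    obtain ⟨v, rfl⟩ := hsur yq
    rw [hQ, hQ, ← hπbr, hRB u v, ← hπbr, ← hπbr, ← hπbr, ← hπsmul, ← hπadd, ← hπadd, hQ]
  -- (3) induced Rstar is Rota-Baxter of weight lam
  · intro xq yq
    obtain ⟨u, rfl⟩ := hsur xq
    obtain ⟨v, rfl⟩ := hsur yq
    have hA : (⁅Rstar u, Rstar v⁆ : L)
        - Rstar (⁅Rstar u, v⁆ + ⁅u, Rstar v⁆ + lam • ⁅u, v⁆)
        = ⁅S u, S v⁆ + ⁅S u, -(R v) - lam • v⁆ + ⁅-(R u) - lam • u, S v⁆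
          - S ⁅S u, v⁆ - S ⁅-(R u) - lam • u, v⁆ - S ⁅u, S v⁆ - S ⁅u, -(R v) - lam • v⁆
          - lam • S ⁅u, v⁆ + R ⁅S u, v⁆ + lam • ⁅S u, v⁆ + R ⁅u, S v⁆ + lam • ⁅u, S v⁆ := by
      have hrb := hRB u v
      rw [map_add, map_add, map_smul] at hrb
      simp only [hRsE, lie_add, add_lie, lie_sub, sub_lie, lie_smul, smul_lie, lie_neg, neg_lie,
        map_add, map_sub, map_smul, map_neg, smul_add, smul_sub, smul_neg, smul_smul]
      linear_combination (norm := module) hrb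
    have hB : (⁅Rstar u, Rstar v⁆ : L)
        - Rstar (⁅Rstar u, v⁆ + ⁅u, Rstar v⁆ + lam • ⁅u, v⁆) ∈ K := by
      rw [hA]
      have m1 : (⁅S u, S v⁆ : L) ∈ K := hgen u (S v)
      have m2 : (⁅S u, -(R v) - lam • v⁆ : L) ∈ K := hgen u _
      have m3 : (⁅-(R u) - lam • u, S v⁆ : L) ∈ K := by
        rw [← lie_skew]
        exact K.neg_mem (hgen v _)
      have m4 : S ⁅S u, v⁆ ∈ K := by
        rw [Sbr (S u) v]
        exact hgen (S u) v
      have m5 : S ⁅-(R u) - lam • u, v⁆ ∈ K := by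
        rw [Sbr _ v]
        exact hgen _ v
      have m6 : S ⁅u, S v⁆ ∈ K := by
        rw [← lie_skew u (S v), map_neg, Sbr (S v) u]
        exact K.neg_mem (hgen (S v) u)
      have m7 : S ⁅u, -(R v) - lam • v⁆ ∈ K := by
        rw [← lie_skew u _, map_neg, Sbr _ u]
        exact K.neg_mem (hgen _ u)
      have m8 : lam • S ⁅u, v⁆ ∈ K := by
        rw [Sbr u v]
        exact K.smul_mem lam (hgen u v)
      have m9 : R ⁅S u, v⁆ ∈ K := by
        rw [key3 u v]
        exact K.zero_mem
      have m10 : lam • (⁅S u, v⁆ : L) ∈ K := K.smul_mem lam (hgen u v)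
      have m11 : R ⁅u, S v⁆ ∈ K := by
        rw [← lie_skew u (S v), map_neg, key3 v u, neg_zero]
        exact K.zero_mem
      have m12 : lam • (⁅u, S v⁆ : L) ∈ K := by
        rw [← lie_skew u (S v)]
        exact K.smul_mem lam (K.neg_mem (hgen v u))
      exact K.add_mem (K.add_mem (K.add_mem (K.add_mem (K.sub_mem (K.sub_mem (K.sub_mem
        (K.sub_mem (K.sub_mem (K.add_mem (K.add_mem m1 m2) m3) m4) m5) m6) m7) m8) m9)
        m10) m11) m12
    rw [hQ, hQ, ← hπbr, ← hπbr, ← hπbr, ← hπbr, ← hπsmul, ← hπadd, ← hπadd, hQ]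
    exact hπeq _ _ hB
  -- (4) final identity on the commutator of the quotient
  · intro z hz
    have hz' : z ∈ Submodule.span F {m : L ⧸ Idl | ∃ x ∈ (⊤ : LieIdeal F (L ⧸ Idl)),
        ∃ n ∈ (⊤ : LieIdeal F (L ⧸ Idl)), ⁅x, n⁆ = m} := by
      rw [← LieSubmodule.lieIdeal_oper_eq_linear_span']
      exact (LieSubmodule.mem_toSubmodule _).mpr hz
    refine Submodule.span_induction ?_ ?_ ?_ ?_ hz'
    · rintro m ⟨xq, -, yq, -, rfl⟩
      obtain ⟨u, rfl⟩ := hsur xq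
      obtain ⟨v, rfl⟩ := hsur yq
      rw [← hπbr, hQ, hQ, ← hπsmul, ← hπadd, ← hπadd]
      have hcomb : R ⁅u, v⁆ + Rstar ⁅u, v⁆ + lam • ⁅u, v⁆ = ⁅S u, v⁆ := by
        rw [← hSapp, Sbr]
      rw [hcomb]
      exact hπ0 _ (hgen u v)
    · simp
    · intro p q _ _ hp hq
      rw [map_add, map_add, smul_add]
      linear_combination (norm := module) hp + hq
    · intro c p _ hp
      rw [map_smul, map_smul, smul_comm lam c, ← smul_add, ← smul_add, hp, smul_zero]
end

section
/- Suppose r is a solution of the classical Yang–Baxter equation on L with r + τ(r) L-invariant, and let λ ∈ F be nonzero. Then R and R* are both Rota–Baxter operators of weight λ if and only if the commutator ideal [L, L] decomposes as a direct sum of two Lie ideals [L, L] = I_1 ⊕ I_2 of L such that R(I_1) = R*(I_1) = 0 and R(x) + R*(x) + λx = 0 for all x ∈ I_2. -/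
open TensorProduct

/-- Contraction `u ⊗ v ↦ ω v z • u`. -/
noncomputable def ctrL {F : Type*} [Field F] {L : Type*} [AddCommGroup L] [Module F L]
    (ω : LinearMap.BilinForm F L) (z : L) : L ⊗[F] L →ₗ[F] L :=
  TensorProduct.lift (LinearMap.mk₂ F (fun u v => ω v z • u)
    (fun u u' v => smul_add _ _ _)
    (fun c u v => smul_comm _ _ _)
    (fun u v v' => by simp [add_smul])
    (fun c u v => by simp [smul_smul]))

@[simp] lemma ctrL_tmul {F : Type*} [Field F] {L : Type*} [AddCommGroup L] [Module F L]
    (ω : LinearMap.BilinForm F L) (z u v : L) : ctrL ω z (u ⊗ₜ[F] v) = ω v z • u := rfl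

/-- Contraction `u ⊗ v ↦ ω u z • v`. -/
noncomputable def ctrR {F : Type*} [Field F] {L : Type*} [AddCommGroup L] [Module F L]
    (ω : LinearMap.BilinForm F L) (z : L) : L ⊗[F] L →ₗ[F] L :=
  TensorProduct.lift (LinearMap.mk₂ F (fun u v => ω u z • v)
    (fun u u' v => by simp [add_smul])
    (fun c u v => by simp [smul_smul])
    (fun u v v' => smul_add _ _ _)
    (fun c u v => smul_comm _ _ _))

@[simp] lemma ctrR_tmul {F : Type*} [Field F] {L : Type*} [AddCommGroup L] [Module F L]
    (ω : LinearMap.BilinForm F L) (z u v : L) : ctrR ω z (u ⊗ₜ[F] v) = ω u z • v := rfl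

/-- Contraction `u ⊗ t ↦ (ω of 2nd,3rd factors) • u` for `t` in `L ⊗ L`. -/
noncomputable def ctr23 {F : Type*} [Field F] {L : Type*} [AddCommGroup L] [Module F L]
    (ω : LinearMap.BilinForm F L) (x y : L) : L ⊗[F] (L ⊗[F] L) →ₗ[F] L :=
  TensorProduct.lift (LinearMap.mk₂ F
    (fun u t => (TensorProduct.lift (LinearMap.mk₂ F (fun v w => ω v x * ω w y)
        (fun v v' w => by simp [add_mul]) (fun c v w => by simp [mul_assoc])
        (fun v w w' => by simp [mul_add]) (fun c v w => by simp; ring)) t) • u)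
    (fun u u' t => smul_add _ _ _)
    (fun c u t => smul_comm _ _ _)
    (fun u t t' => by simp [add_smul])
    (fun c u t => by simp [smul_smul]))

@[simp] lemma ctr23_tmul {F : Type*} [Field F] {L : Type*} [AddCommGroup L] [Module F L]
    (ω : LinearMap.BilinForm F L) (x y u v w : L) :
    ctr23 ω x y (u ⊗ₜ[F] (v ⊗ₜ[F] w)) = (ω v x * ω w y) • u := rfl

/-- Contraction `u ⊗ (v ⊗ w) ↦ (ω u x * ω v y) • w`. -/
noncomputable def ctr12 {F : Type*} [Field F] {L : Type*} [AddCommGroup L] [Module F L]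
    (ω : LinearMap.BilinForm F L) (x y : L) : L ⊗[F] (L ⊗[F] L) →ₗ[F] L :=
  TensorProduct.lift (LinearMap.mk₂ F
    (fun u t => ω u x • ctrR ω y t)
    (fun u u' t => by simp [add_smul])
    (fun c u t => by simp [smul_smul])
    (fun u t t' => by simp [smul_add])
    (fun c u t => by show ω u x • ctrR ω y (c • t) = c • (ω u x • ctrR ω y t); rw [map_smul]; exact smul_comm _ _ _))

@[simp] lemma ctr12_tmul {F : Type*} [Field F] {L : Type*} [AddCommGroup L] [Module F L]
    (ω : LinearMap.BilinForm F L) (x y u v w : L) :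
    ctr12 ω x y (u ⊗ₜ[F] (v ⊗ₜ[F] w)) = (ω u x * ω v y) • w := by
  simp [ctr12, mul_smul]

lemma sum_lie'' {L : Type*} [LieRing L] {ι : Type*} (s : Finset ι) (f : ι → L) (y : L) :
    ⁅∑ i ∈ s, f i, y⁆ = ∑ i ∈ s, ⁅f i, y⁆ := by
  classical
  induction s using Finset.induction with
  | empty => simp
  | insert _ _ h ih => rw [Finset.sum_insert h, Finset.sum_insert h, add_lie, ih]

lemma lie_sum'' {L : Type*} [LieRing L] {ι : Type*} (s : Finset ι) (f : ι → L) (y : L) :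
    ⁅y, ∑ i ∈ s, f i⁆ = ∑ i ∈ s, ⁅y, f i⁆ := by
  classical
  induction s using Finset.induction with
  | empty => simp
  | insert _ _ h ih => rw [Finset.sum_insert h, Finset.sum_insert h, lie_add, ih]


theorem stmt_13
    (F : Type*) [Field F] [CharZero F]
    (L : Type*) [LieRing L] [LieAlgebra F L] [FiniteDimensional F L]
    (ω : LinearMap.BilinForm F L)
    (hnd : ω.Nondegenerate)
    (hsymm : ∀ x y : L, ω x y = ω y x)
    (hinv : ∀ x y z : L, ω ⁅x, y⁆ z = ω x ⁅y, z⁆)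
    (ι : Type*) [Fintype ι] (a b : ι → L)
    (R Rstar : L →ₗ[F] L)
    (hR : ∀ x : L, R x = ∑ i, ω (b i) x • a i)
    (hadj : ∀ x y : L, ω (R x) y = ω x (Rstar y))
    (hCYBE : ∑ i, ∑ j, (⁅a i, a j⁆ ⊗ₜ[F] (b i ⊗ₜ[F] b j)
        - a i ⊗ₜ[F] (⁅a j, b i⁆ ⊗ₜ[F] b j)
        + a i ⊗ₜ[F] (a j ⊗ₜ[F] ⁅b i, b j⁆)) = (0 : L ⊗[F] (L ⊗[F] L)))
    (hinvr : ∀ y : L, ∑ i, (⁅a i, y⁆ ⊗ₜ[F] b i + a i ⊗ₜ[F] ⁅b i, y⁆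
        + ⁅b i, y⁆ ⊗ₜ[F] a i + b i ⊗ₜ[F] ⁅a i, y⁆) = (0 : L ⊗[F] L))
    (lam : F) (hlam : lam ≠ 0) :
    ((∀ x y : L, ⁅R x, R y⁆ = R (⁅R x, y⁆ + ⁅x, R y⁆ + lam • ⁅x, y⁆)) ∧
     (∀ x y : L, ⁅Rstar x, Rstar y⁆ = Rstar (⁅Rstar x, y⁆ + ⁅x, Rstar y⁆ + lam • ⁅x, y⁆)))
    ↔ (∃ I₁ I₂ : LieIdeal F L,
        I₁ ⊔ I₂ = ⁅(⊤ : LieIdeal F L), (⊤ : LieIdeal F L)⁆ ∧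
        I₁ ⊓ I₂ = ⊥ ∧
        (∀ x ∈ I₁, R x = 0 ∧ Rstar x = 0) ∧
        (∀ x ∈ I₂, R x + Rstar x + lam • x = 0)) := by
  classical
  -- formula for Rstar
  have hRs : ∀ x : L, Rstar x = ∑ i, ω (a i) x • b i := by
    intro x
    have key : ∀ z : L, ω (Rstar x - ∑ i, ω (a i) x • b i) z = 0 := by
      intro z
      have h1 : ω (R z) x = ω z (Rstar x) := hadj z x
      rw [hR z] at h1
      simp only [map_sum, map_smul, LinearMap.sum_apply, LinearMap.smul_apply,
        smul_eq_mul, map_sub, LinearMap.sub_apply] at h1 ⊢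
      rw [hsymm (Rstar x) z, ← h1, sub_eq_zero]
      exact Finset.sum_congr rfl (fun i _ => by rw [hsymm (b i) z]; ring)
    exact sub_eq_zero.mp (hnd.1 _ key)
  -- invariance of the symmetric part: ⁅(R+R*)z, y⁆ = (R+R*)⁅z,y⁆ (in the form below)
  have hS0 : ∀ z y : L, ⁅R z, y⁆ + R ⁅y, z⁆ + ⁅Rstar z, y⁆ + Rstar ⁅y, z⁆ = 0 := by
    intro z y
    have h0 := congrArg (ctrL ω z) (hinvr y)
    simp only [map_sum, map_add, map_zero, ctrL_tmul] at h0
    rw [hR z, hRs z, hR ⁅y, z⁆, hRs ⁅y, z⁆, ← h0]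
    rw [sum_lie'', sum_lie'']
    rw [← Finset.sum_add_distrib, ← Finset.sum_add_distrib, ← Finset.sum_add_distrib]
    refine Finset.sum_congr rfl (fun i _ => ?_)
    rw [hinv (b i) y z, hinv (a i) y z, smul_lie, smul_lie]
  -- CYBE contraction for R
  have hB : ∀ x y : L, ⁅R x, R y⁆ + R ⁅R y, x⁆ + R ⁅Rstar x, y⁆ = 0 := by
    intro x y
    have h0 := congrArg (ctr23 ω x y) hCYBE
    simp only [map_sum, map_sub, map_add, map_zero, ctr23_tmul] at h0
    have k2 : ∀ i j : ι, ω ⁅a j, b i⁆ x = -(ω (b i) ⁅a j, x⁆) := by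
      intro i j
      rw [← lie_skew, map_neg, LinearMap.neg_apply, hinv]
    have k3 : ∀ i j : ι, ω ⁅b i, b j⁆ y = ω (b i) ⁅b j, y⁆ := fun i j => hinv _ _ _
    simp only [k2, k3, neg_mul, neg_smul, sub_neg_eq_add, Finset.sum_add_distrib] at h0
    have g1 : ⁅R x, R y⁆ = ∑ i, ∑ j, (ω (b i) x * ω (b j) y) • ⁅a i, a j⁆ := by
      rw [hR x, hR y, sum_lie'']
      refine Finset.sum_congr rfl fun i _ => ?_
      rw [smul_lie, lie_sum'', Finset.smul_sum]
      refine Finset.sum_congr rfl fun j _ => ?_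
      rw [lie_smul, smul_smul]
    have g2 : R ⁅R y, x⁆ = ∑ i, ∑ j, (ω (b i) ⁅a j, x⁆ * ω (b j) y) • a i := by
      rw [hR y, sum_lie'', map_sum, Finset.sum_comm]
      refine Finset.sum_congr rfl fun j _ => ?_
      rw [smul_lie, map_smul, hR ⁅a j, x⁆, Finset.smul_sum]
      refine Finset.sum_congr rfl fun i _ => ?_
      rw [smul_smul, mul_comm]
    have g3 : R ⁅Rstar x, y⁆ = ∑ i, ∑ j, (ω (a j) x * ω (b i) ⁅b j, y⁆) • a i := by
      rw [hRs x, sum_lie'', map_sum, Finset.sum_comm]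
      refine Finset.sum_congr rfl fun j _ => ?_
      rw [smul_lie, map_smul, hR ⁅b j, y⁆, Finset.smul_sum]
      refine Finset.sum_congr rfl fun i _ => ?_
      rw [smul_smul]
    rw [g1, g2, g3]
    exact h0
  -- CYBE contraction for Rstar
  have hC : ∀ x y : L,
      -Rstar ⁅R y, x⁆ - Rstar ⁅Rstar x, y⁆ + ⁅Rstar x, Rstar y⁆ = 0 := by
    intro x y
    have h0 := congrArg (ctr12 ω x y) hCYBE
    simp only [map_sum, map_sub, map_add, map_zero, ctr12_tmul] at h0
    have k1 : ∀ i j : ι, ω ⁅a i, a j⁆ x = ω (a i) ⁅a j, x⁆ := fun i j => hinv _ _ _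
    have k2 : ∀ i j : ι, ω ⁅a j, b i⁆ y = ω (a j) ⁅b i, y⁆ := fun i j => hinv _ _ _
    simp only [k1, k2, Finset.sum_sub_distrib, Finset.sum_add_distrib] at h0
    have g1 : ∑ i, ∑ j, (ω (a i) ⁅a j, x⁆ * ω (b i) y) • b j = -Rstar ⁅R y, x⁆ := by
      rw [hRs ⁅R y, x⁆, ← Finset.sum_neg_distrib, Finset.sum_comm]
      refine Finset.sum_congr rfl fun j _ => ?_
      rw [← neg_smul, ← Finset.sum_smul]
      congr 1
      have : ω (a j) ⁅R y, x⁆ = -(ω (R y)) ⁅a j, x⁆ := by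
        rw [← hinv (a j) (R y) x, ← lie_skew, map_neg, LinearMap.neg_apply,
          hinv (R y) (a j) x]
      rw [this, neg_neg, hR y, map_sum, LinearMap.sum_apply]
      refine Finset.sum_congr rfl fun i _ => ?_
      rw [map_smul, LinearMap.smul_apply, smul_eq_mul, mul_comm]
    have g2 : ∑ i, ∑ j, (ω (a i) x * ω (a j) ⁅b i, y⁆) • b j = Rstar ⁅Rstar x, y⁆ := by
      rw [hRs x, sum_lie'', map_sum]
      refine Finset.sum_congr rfl fun i _ => ?_
      rw [smul_lie, map_smul, hRs ⁅b i, y⁆, Finset.smul_sum]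
      refine Finset.sum_congr rfl fun j _ => ?_
      rw [smul_smul]
    have g3 : ∑ i, ∑ j, (ω (a i) x * ω (a j) y) • ⁅b i, b j⁆ = ⁅Rstar x, Rstar y⁆ := by
      rw [hRs x, hRs y, sum_lie'']
      refine Finset.sum_congr rfl fun i _ => ?_
      rw [smul_lie, lie_sum'', Finset.smul_sum]
      refine Finset.sum_congr rfl fun j _ => ?_
      rw [lie_smul, smul_smul]
    rw [g1, g2, g3] at h0
    exact h0
  -- symmetric-part intertwining, two forms
  have hS1 : ∀ z y : L, ⁅R z, y⁆ + ⁅Rstar z, y⁆ = R ⁅z, y⁆ + Rstar ⁅z, y⁆ := by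
    intro z y
    have h := hS0 z y
    rw [show ⁅y, z⁆ = -⁅z, y⁆ by rw [← lie_skew], map_neg, map_neg] at h
    refine sub_eq_zero.mp ?_
    rw [← h]; abel
  have hS2 : ∀ x y : L, R ⁅x, y⁆ + Rstar ⁅x, y⁆ = ⁅x, R y⁆ + ⁅x, Rstar y⁆ := by
    intro x y
    have h := hS0 y x
    rw [show ⁅R y, x⁆ = -⁅x, R y⁆ by rw [← lie_skew],
      show ⁅Rstar y, x⁆ = -⁅x, Rstar y⁆ by rw [← lie_skew]] at h
    refine sub_eq_zero.mp ?_
    rw [← h]; abel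
  -- the two key identities
  have key1 : ∀ x y : L, ⁅R x, R y⁆ - R (⁅R x, y⁆ + ⁅x, R y⁆ + lam • ⁅x, y⁆)
      = -(R (R ⁅x, y⁆ + Rstar ⁅x, y⁆ + lam • ⁅x, y⁆)) := by
    intro x y
    have h1 := hB x y
    rw [show ⁅R y, x⁆ = -⁅x, R y⁆ by rw [← lie_skew], map_neg] at h1
    have h4 := congrArg R (hS1 x y)
    rw [map_add, map_add] at h4
    simp only [map_add, map_smul]
    rw [← h4]
    refine sub_eq_zero.mp ?_
    rw [← h1]; abel
  have key2 : ∀ x y : L, ⁅Rstar x, Rstar y⁆ - Rstar (⁅Rstar x, y⁆ + ⁅x, Rstar y⁆ + lam • ⁅x, y⁆)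
      = -(Rstar (R ⁅x, y⁆ + Rstar ⁅x, y⁆ + lam • ⁅x, y⁆)) := by
    intro x y
    have h1 := hC x y
    rw [show ⁅R y, x⁆ = -⁅x, R y⁆ by rw [← lie_skew], map_neg, neg_neg] at h1
    have h4 := congrArg Rstar (hS2 x y)
    rw [map_add, map_add] at h4
    simp only [map_add, map_smul]
    rw [h4]
    refine sub_eq_zero.mp ?_
    rw [← h1]; abel
  set D : LieIdeal F L := ⁅(⊤ : LieIdeal F L), (⊤ : LieIdeal F L)⁆ with hDdef
  have hDspan : LieSubmodule.toSubmodule D = Submodule.span F {m : L | ∃ u v : L, ⁅u, v⁆ = m} := by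
    rw [hDdef, LieSubmodule.lieIdeal_oper_eq_linear_span']
    congr 1
    ext m
    constructor
    · rintro ⟨u, -, v, -, h⟩; exact ⟨u, v, h⟩
    · rintro ⟨u, v, h⟩; exact ⟨u, LieSubmodule.mem_top u, v, LieSubmodule.mem_top v, h⟩
  have hmemD : ∀ u v : L, ⁅u, v⁆ ∈ D :=
    fun u v => LieSubmodule.lie_mem_lie (LieSubmodule.mem_top u) (LieSubmodule.mem_top v)
  constructor
  · rintro ⟨hRB, hRBs⟩
    have hcond : ∀ x y : L, R (R ⁅x, y⁆ + Rstar ⁅x, y⁆ + lam • ⁅x, y⁆) = 0 := by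
      intro x y
      have h := key1 x y
      rw [← hRB x y, sub_self] at h
      exact neg_eq_zero.mp h.symm
    have hconds : ∀ x y : L, Rstar (R ⁅x, y⁆ + Rstar ⁅x, y⁆ + lam • ⁅x, y⁆) = 0 := by
      intro x y
      have h := key2 x y
      rw [← hRBs x y, sub_self] at h
      exact neg_eq_zero.mp h.symm
    -- property propagates to all of D
    have hDprop : ∀ x ∈ D, R (R x + Rstar x + lam • x) = 0 ∧ Rstar (R x + Rstar x + lam • x) = 0 := by
      intro x hx
      rw [← LieSubmodule.mem_toSubmodule, hDspan] at hx
      induction hx using Submodule.span_induction with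
      | mem m hm => obtain ⟨u, v, rfl⟩ := hm; exact ⟨hcond u v, hconds u v⟩
      | zero => simp
      | add u v hu hv ihu ihv =>
        have e : R (u + v) + Rstar (u + v) + lam • (u + v)
            = (R u + Rstar u + lam • u) + (R v + Rstar v + lam • v) := by
          simp only [map_add, smul_add]; abel
        rw [e]
        constructor
        · rw [map_add, ihu.1, ihv.1, add_zero]
        · rw [map_add, ihu.2, ihv.2, add_zero]
      | smul c u hu ihu =>
        have e : R (c • u) + Rstar (c • u) + lam • (c • u)
            = c • (R u + Rstar u + lam • u) := by
          simp only [map_smul, smul_add]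
          rw [smul_comm lam c]
        rw [e]
        constructor
        · rw [map_smul, ihu.1, smul_zero]
        · rw [map_smul, ihu.2, smul_zero]
    -- S maps D into D
    have hSD : ∀ x ∈ D, R x + Rstar x ∈ D := by
      have hle : LieSubmodule.toSubmodule D ≤ (LieSubmodule.toSubmodule D).comap ((R + Rstar : L →ₗ[F] L)) := by
        conv_lhs => rw [hDspan]
        apply Submodule.span_le.mpr
        rintro m ⟨u, v, rfl⟩
        simp only [SetLike.mem_coe, Submodule.mem_comap, LinearMap.add_apply,
          LieSubmodule.mem_toSubmodule]
        rw [← hS1 u v]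
        exact add_mem (hmemD (R u) v) (hmemD (Rstar u) v)
      intro x hx
      have := hle ((LieSubmodule.mem_toSubmodule _).mpr hx)
      simpa only [Submodule.mem_comap, LinearMap.add_apply,
        LieSubmodule.mem_toSubmodule] using this
    refine ⟨{ carrier := {x : L | x ∈ D ∧ R x + Rstar x = 0}
              add_mem' := ?_
              zero_mem' := ?_
              smul_mem' := ?_
              lie_mem := ?_ },
            { carrier := {x : L | x ∈ D ∧ R x + Rstar x + lam • x = 0}
              add_mem' := ?_
              zero_mem' := ?_
              smul_mem' := ?_
              lie_mem := ?_ }, ?_, ?_, ?_, ?_⟩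
    · rintro u v ⟨hu1, hu2⟩ ⟨hv1, hv2⟩
      refine ⟨add_mem hu1 hv1, ?_⟩
      rw [map_add, map_add, show R u + R v + (Rstar u + Rstar v)
        = (R u + Rstar u) + (R v + Rstar v) by abel, hu2, hv2, add_zero]
    · exact ⟨D.zero_mem, by simp⟩
    · rintro c u ⟨hu1, hu2⟩
      refine ⟨SMulMemClass.smul_mem c hu1, ?_⟩
      rw [map_smul, map_smul, ← smul_add, hu2, smul_zero]
    · rintro y u ⟨hu1, hu2⟩
      refine ⟨D.lie_mem hu1, ?_⟩
      rw [hS2, ← lie_add, hu2, lie_zero]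
    · rintro u v ⟨hu1, hu2⟩ ⟨hv1, hv2⟩
      refine ⟨add_mem hu1 hv1, ?_⟩
      rw [map_add, map_add, smul_add, show R u + R v + (Rstar u + Rstar v) + (lam • u + lam • v)
        = (R u + Rstar u + lam • u) + (R v + Rstar v + lam • v) by abel, hu2, hv2, add_zero]
    · exact ⟨D.zero_mem, by simp⟩
    · rintro c u ⟨hu1, hu2⟩
      refine ⟨SMulMemClass.smul_mem c hu1, ?_⟩
      rw [map_smul, map_smul, smul_comm lam c, ← smul_add, ← smul_add, hu2, smul_zero]
    · rintro y u ⟨hu1, hu2⟩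
      refine ⟨D.lie_mem hu1, ?_⟩
      rw [hS2, ← lie_add, ← lie_smul, ← lie_add, hu2, lie_zero]
    -- sup = D
    · apply le_antisymm
      · apply sup_le
        · intro x hx; exact hx.1
        · intro x hx; exact hx.1
      · intro x hx
        rw [LieSubmodule.mem_sup]
        refine ⟨lam⁻¹ • (R x + Rstar x + lam • x), ?_, -(lam⁻¹) • (R x + Rstar x), ?_, ?_⟩
        · constructor
          · exact SMulMemClass.smul_mem _ (add_mem (hSD x hx) (SMulMemClass.smul_mem _ hx))
          · rw [map_smul, map_smul, ← smul_add, (hDprop x hx).1, (hDprop x hx).2, add_zero,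
              smul_zero]
        · constructor
          · exact SMulMemClass.smul_mem _ (hSD x hx)
          · have e : R (-(lam⁻¹) • (R x + Rstar x)) + Rstar (-(lam⁻¹) • (R x + Rstar x))
                + lam • (-(lam⁻¹) • (R x + Rstar x))
                = (-(lam⁻¹)) • (R (R x + Rstar x + lam • x) + Rstar (R x + Rstar x + lam • x)) := by
              simp only [map_smul, map_add, smul_add]
              match_scalars <;> field_simp
            rw [e, (hDprop x hx).1, (hDprop x hx).2, add_zero, smul_zero]
        · match_scalars <;> field_simp <;> ring
    -- inf = ⊥
    · rw [eq_bot_iff]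
      intro x hx
      rw [LieSubmodule.mem_inf] at hx
      obtain ⟨⟨-, h2⟩, -, h4⟩ := hx
      rw [LieSubmodule.mem_bot]
      rw [h2, zero_add] at h4
      exact (smul_eq_zero.mp h4).resolve_left hlam
    -- membership conditions
    · rintro x ⟨hx1, hx2⟩
      have h := (hDprop x hx1).1
      have h' := (hDprop x hx1).2
      rw [hx2, zero_add, map_smul] at h h'
      exact ⟨(smul_eq_zero.mp h).resolve_left hlam, (smul_eq_zero.mp h').resolve_left hlam⟩
    · rintro x ⟨-, hx2⟩
      exact hx2
  · rintro ⟨I₁, I₂, hsup, hinf, h1, h2⟩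
    have hcond : ∀ x y : L, R (R ⁅x, y⁆ + Rstar ⁅x, y⁆ + lam • ⁅x, y⁆) = 0 ∧
        Rstar (R ⁅x, y⁆ + Rstar ⁅x, y⁆ + lam • ⁅x, y⁆) = 0 := by
      intro x y
      have hmem : ⁅x, y⁆ ∈ I₁ ⊔ I₂ := by rw [hsup]; exact hmemD x y
      rw [LieSubmodule.mem_sup] at hmem
      obtain ⟨u, hu, v, hv, huv⟩ := hmem
      have hu' := h1 u hu
      have hv' := h2 v hv
      have hc : R ⁅x, y⁆ + Rstar ⁅x, y⁆ + lam • ⁅x, y⁆ = lam • u := by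
        have e1 : R ⁅x, y⁆ = R v := by rw [← huv, map_add, hu'.1, zero_add]
        have e2 : Rstar ⁅x, y⁆ = Rstar v := by rw [← huv, map_add, hu'.2, zero_add]
        have e3 : lam • ⁅x, y⁆ = lam • u + lam • v := by rw [← huv, smul_add]
        rw [e1, e2, e3, show R v + Rstar v + (lam • u + lam • v)
          = (R v + Rstar v + lam • v) + lam • u by abel, hv', zero_add]
      refine ⟨by rw [hc, map_smul, hu'.1, smul_zero], by rw [hc, map_smul, hu'.2, smul_zero]⟩
    constructor
    · intro x y
      have h := key1 x y
      rw [(hcond x y).1, neg_zero, sub_eq_zero] at h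
      exact h
    · intro x y
      have h := key2 x y
      rw [(hcond x y).2, neg_zero, sub_eq_zero] at h
      exact h
end
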